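/- Let η be a nonperiodic Toeplitz sequence over a finite alphabet Λ and (X, T) its associated Toeplitz flow. Then the rational subgroup ℚ(K⁰(X,T), 𝟙) is not cyclic; concretely, for every N ∈ ℕ there exist an integer p > N and functions f, g ∈ C(X,ℤ) with p·f − 1 = g − g∘T⁻¹. -/

import Mathlib

/-- A Toeplitz sequence: every position is periodic for some period `p ≥ 1`. -/
def IsToeplitz {Λ : Type*} (η : ℤ → Λ) : Prop :=
  ∀ n : ℤ, ∃ p : ℤ, 1 ≤ p ∧ ∀ m : ℤ, η (n + m * p) = η n

/-- A sequence is nonperiodic if it has no global period `p ≥ 1`. -/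
def IsNonperiodic {Λ : Type*} (η : ℤ → Λ) : Prop :=
  ¬ ∃ p : ℤ, 1 ≤ p ∧ ∀ n : ℤ, η (n + p) = η n

/-- The two-sided shift orbit of `η` in `Λ^ℤ`. -/
def shiftOrbit {Λ : Type*} (η : ℤ → Λ) : Set (ℤ → Λ) :=
  {x | ∃ n : ℤ, x = fun k => η (k + n)}

/-- The shift homeomorphism on `Λ^ℤ`. -/
def shiftHomeo (Λ : Type*) [TopologicalSpace Λ] : (ℤ → Λ) ≃ₜ (ℤ → Λ) where
  toFun x := fun k => x (k + 1)
  invFun x := fun k => x (k - 1)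
  left_inv x := by funext k; simp
  right_inv x := by funext k; simp
  continuous_toFun := continuous_pi fun k => continuous_apply (k + 1)
  continuous_invFun := continuous_pi fun k => continuous_apply (k - 1)

/-- The phase space of the Toeplitz flow of `η`: the orbit closure of `η`. -/
def toeplitzX {Λ : Type*} [TopologicalSpace Λ] (η : ℤ → Λ) : Set (ℤ → Λ) :=
  closure (shiftOrbit η)

lemma shiftHomeo_image_orbit {Λ : Type*} [TopologicalSpace Λ] (η : ℤ → Λ) :
    shiftHomeo Λ '' shiftOrbit η = shiftOrbit η := by
  ext x
  constructor
  · rintro ⟨y, ⟨n, rfl⟩, rfl⟩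
    exact ⟨n + 1, by funext k; show η (k + 1 + n) = η (k + (n + 1)); ring_nf⟩
  · rintro ⟨n, rfl⟩
    refine ⟨fun k => η (k + (n - 1)), ⟨n - 1, rfl⟩, ?_⟩
    funext k; show η (k + 1 + (n - 1)) = η (k + n); ring_nf

lemma shiftHomeo_image_toeplitzX {Λ : Type*} [TopologicalSpace Λ] (η : ℤ → Λ) :
    shiftHomeo Λ '' toeplitzX η = toeplitzX η := by
  rw [toeplitzX, Homeomorph.image_closure, shiftHomeo_image_orbit]

/-- The Toeplitz flow transformation: the shift restricted to the orbit
closure of `η`. -/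
def toeplitzT {Λ : Type*} [TopologicalSpace Λ] (η : ℤ → Λ) :
    ↥(toeplitzX η) ≃ₜ ↥(toeplitzX η) :=
  ((shiftHomeo Λ).image (toeplitzX η)).trans
    (Homeomorph.setCongr (shiftHomeo_image_toeplitzX η))


section Aux

variable {Λ : Type*}

/-- The set of positions of `η` that are periodic with period `p`. -/
def PerS (η : ℤ → Λ) (p : ℕ) : Set ℤ := {n | ∀ m : ℤ, η (n + m * p) = η n}

open scoped Classical in
/-- The `p`-skeleton of `η`, as a partial function on residues mod `p`. -/
noncomputable def skel (η : ℤ → Λ) (p : ℕ) (c : ZMod p) : Option Λ :=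
  if ((c.val : ℤ) ∈ PerS η p) then some (η c.val) else none

/-- The set of `y` compatible with the `p`-skeleton of `η` shifted by `d`. -/
def ZS (η : ℤ → Λ) (p : ℕ) (d : ZMod p) : Set (ℤ → Λ) :=
  {y | ∀ (j : ℤ) (a : Λ), skel η p ((j : ZMod p) + d) = some a → y j = a}

/-- The stabilizer of the `p`-skeleton of `η`. -/
def HS (η : ℤ → Λ) (p : ℕ) : AddSubgroup ℤ where
  carrier := {s : ℤ | ∀ c : ZMod p, skel η p (c + (s : ZMod p)) = skel η p c}
  zero_mem' := by intro c; simp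
  add_mem' := by
    intro a b ha hb c
    have : ((a + b : ℤ) : ZMod p) = (a : ZMod p) + (b : ZMod p) := by push_cast; ring
    rw [this, ← add_assoc, hb, ha]
  neg_mem' := by
    intro a ha c
    have := ha (c + ((-a : ℤ) : ZMod p))
    have h2 : (c + ((-a : ℤ) : ZMod p)) + (a : ZMod p) = c := by push_cast; ring
    rw [h2] at this
    exact this.symm

lemma perS_mod {η : ℤ → Λ} {p : ℕ} {n n' : ℤ} (hd : (p : ℤ) ∣ n' - n) (hn : n ∈ PerS η p) :
    n' ∈ PerS η p ∧ η n' = η n := by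
  obtain ⟨t, ht⟩ := hd
  have hn' : n' = n + t * p := by linarith [ht]
  constructor
  · intro m
    rw [hn']
    have h1 : n + t * p + m * p = n + (t + m) * p := by ring
    rw [h1, hn (t + m), ← hn t]
  · rw [hn']; exact hn t

lemma cast_eq_iff_dvd {p : ℕ} {n n' : ℤ} : ((n : ZMod p) = (n' : ZMod p)) ↔ (p : ℤ) ∣ n' - n := by
  rw [ZMod.intCast_eq_intCast_iff, Int.modEq_iff_dvd]

lemma skel_eq_some {η : ℤ → Λ} {p : ℕ} [NeZero p] {n : ℤ} {c : ZMod p}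
    (hc : (n : ZMod p) = c) (hn : n ∈ PerS η p) : skel η p c = some (η n) := by
  have hcast : ((c.val : ℤ) : ZMod p) = (n : ZMod p) := by
    rw [hc]; push_cast [ZMod.natCast_val]; simp [ZMod.intCast_cast]
  have hdvd : (p : ℤ) ∣ (c.val : ℤ) - n := cast_eq_iff_dvd.mp hcast.symm
  obtain ⟨hmem, hval⟩ := perS_mod hdvd hn
  rw [skel, if_pos hmem, hval]

lemma skel_some {η : ℤ → Λ} {p : ℕ} [NeZero p] {n : ℤ} {c : ZMod p} {a : Λ}
    (h : skel η p c = some a) (hc : (n : ZMod p) = c) : n ∈ PerS η p ∧ η n = a := by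
  rw [skel] at h
  by_cases hmem : ((c.val : ℤ) ∈ PerS η p)
  · rw [if_pos hmem] at h
    have hcast : ((c.val : ℤ) : ZMod p) = (n : ZMod p) := by
      rw [hc]; push_cast [ZMod.natCast_val]; simp [ZMod.intCast_cast]
    have hdvd : (p : ℤ) ∣ n - (c.val : ℤ) := cast_eq_iff_dvd.mp hcast
    obtain ⟨hmem', hval⟩ := perS_mod hdvd hmem
    exact ⟨hmem', by rw [hval, Option.some_inj.mp h]⟩
  · rw [if_neg hmem] at h; exact absurd h (by simp)

lemma mem_HS_iff {η : ℤ → Λ} {p : ℕ} {s : ℤ} :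
    s ∈ HS η p ↔ ∀ c : ZMod p, skel η p (c + (s : ZMod p)) = skel η p c := Iff.rfl

lemma HS_stab {η : ℤ → Λ} {p : ℕ} [NeZero p] {s n : ℤ} (hs : s ∈ HS η p) (hn : n ∈ PerS η p) :
    (n + s) ∈ PerS η p ∧ η (n + s) = η n := by
  have h1 : skel η p ((n : ZMod p) + (s : ZMod p)) = some (η n) := by
    rw [mem_HS_iff.mp hs]; exact skel_eq_some rfl hn
  exact skel_some h1 (by push_cast; ring)



lemma period_mul {η : ℤ → Λ} {n : ℤ} {a b : ℕ} (h : ∀ m : ℤ, η (n + m * a) = η n)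
    (hab : a ∣ b) : ∀ m : ℤ, η (n + m * b) = η n := by
  intro m
  obtain ⟨c, rfl⟩ := hab
  have : n + m * ((a * c : ℕ) : ℤ) = n + (m * c) * a := by push_cast; ring
  rw [this, h]

noncomputable def perOf {η : ℤ → Λ} (htoe : IsToeplitz η) (n : ℤ) : ℕ :=
  (htoe n).choose.toNat

lemma perOf_pos {η : ℤ → Λ} (htoe : IsToeplitz η) (n : ℤ) : 0 < perOf htoe n := by
  have h := (htoe n).choose_spec.1
  simp only [perOf]
  omega

lemma perOf_spec {η : ℤ → Λ} (htoe : IsToeplitz η) (n : ℤ) :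
    ∀ m : ℤ, η (n + m * (perOf htoe n : ℤ)) = η n := by
  intro m
  have h1 := (htoe n).choose_spec.1
  have h2 := (htoe n).choose_spec.2 m
  have : ((perOf htoe n : ℕ) : ℤ) = (htoe n).choose := by simp only [perOf]; omega
  rw [this]
  exact h2

noncomputable def PP {η : ℤ → Λ} (htoe : IsToeplitz η) (R : ℕ) : ℕ :=
  (Finset.Icc (-(R : ℤ)) R).lcm (perOf htoe)

lemma PP_pos {η : ℤ → Λ} (htoe : IsToeplitz η) (R : ℕ) : 0 < PP htoe R := by
  rcases Nat.eq_zero_or_pos (PP htoe R) with h | h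
  · exfalso
    rw [PP, Finset.lcm_eq_zero_iff] at h
    obtain ⟨n, -, hn⟩ := h
    have := perOf_pos htoe n; omega
  · exact h

lemma PP_period {η : ℤ → Λ} (htoe : IsToeplitz η) (R : ℕ) :
    ∀ n : ℤ, |n| ≤ (R : ℤ) → ∀ m : ℤ, η (n + m * (PP htoe R : ℤ)) = η n := by
  intro n hn
  exact period_mul (perOf_spec htoe n)
    (Finset.dvd_lcm (by rw [Finset.mem_Icc]; exact abs_le.mp hn))

set_option linter.unusedSectionVars false
section TopLemmas
variable [TopologicalSpace Λ] [DiscreteTopology Λ]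

lemma ZS_closed (η : ℤ → Λ) (p : ℕ) (d : ZMod p) : IsClosed (ZS η p d) := by
  have : ZS η p d = ⋂ (j : ℤ), ⋂ (a : Λ), ⋂ (_ : skel η p ((j : ZMod p) + d) = some a),
      (fun y : ℤ → Λ => y j) ⁻¹' {a} := by
    ext y; simp [ZS]
  rw [this]
  exact isClosed_iInter fun j => isClosed_iInter fun a => isClosed_iInter fun _ =>
    IsClosed.preimage (continuous_apply j) isClosed_singleton

lemma ZS_shift {η : ℤ → Λ} {p : ℕ} {d : ZMod p} {y : ℤ → Λ} (hy : y ∈ ZS η p d) (s : ℤ) :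
    (fun j => y (j + s)) ∈ ZS η p (d + (s : ZMod p)) := by
  intro j a ha
  have : (((j + s : ℤ)) : ZMod p) + d = (j : ZMod p) + (d + (s : ZMod p)) := by push_cast; ring
  exact hy (j + s) a (by rw [this]; exact ha)

/-- a cylinder agreement criterion for closure membership -/
lemma mem_closure_of_cylinder {S : Set (ℤ → Λ)} {x : ℤ → Λ}
    (h : ∀ R : ℕ, ∃ y ∈ S, ∀ i : ℤ, |i| ≤ (R : ℤ) → y i = x i) : x ∈ closure S := by
  rw [mem_closure_iff]
  intro o ho hxo
  obtain ⟨I, u, hIu, hsub⟩ := isOpen_pi_iff.mp ho x hxo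
  obtain ⟨y, hyS, hy⟩ := h (I.sup Int.natAbs)
  refine ⟨y, hsub ?_, hyS⟩
  intro i hi
  have : |i| ≤ ((I.sup Int.natAbs : ℕ) : ℤ) := by
    rw [Int.abs_eq_natAbs]
    exact_mod_cast Finset.le_sup (f := Int.natAbs) hi
  rw [hy i this]
  exact (hIu i hi).2

lemma cylinder_of_mem_closure {S : Set (ℤ → Λ)} {x : ℤ → Λ} (hx : x ∈ closure S) (R : ℕ) :
    ∃ y ∈ S, ∀ i : ℤ, |i| ≤ (R : ℤ) → y i = x i := by
  have ho : IsOpen {y : ℤ → Λ | ∀ i : ℤ, |i| ≤ (R : ℤ) → y i = x i} := by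
    have : {y : ℤ → Λ | ∀ i : ℤ, |i| ≤ (R : ℤ) → y i = x i}
        = ⋂ (i : ℤ) (_ : i ∈ Finset.Icc (-(R:ℤ)) R), (fun y : ℤ → Λ => y i) ⁻¹' {x i} := by
      ext y
      simp only [Set.mem_setOf_eq, Set.mem_iInter, Set.mem_preimage, Set.mem_singleton_iff,
        Finset.mem_Icc]
      constructor
      · intro h i hi; exact h i (abs_le.mpr hi)
      · intro h i hi; exact h i (abs_le.mp hi)
    rw [this]
    exact isOpen_biInter_finset fun i _ => (continuous_apply i).isOpen_preimage _ (isOpen_discrete _)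
  obtain ⟨y, hy1, hy2⟩ := mem_closure_iff.mp hx _ ho (fun i _ => rfl)
  exact ⟨y, hy2, hy1⟩

end TopLemmas

section Screen
variable {η : ℤ → Λ} {p : ℕ} [NeZero p]

lemma orbit_mem_ZS (η : ℤ → Λ) (p : ℕ) [NeZero p] (k : ℤ) :
    (fun j => η (j + k)) ∈ ZS η p ((k : ZMod p)) := by
  intro j a ha
  exact (skel_some ha (by push_cast; ring)).2

lemma screen {e : ZMod p} (hη : η ∈ ZS η p e) :
    ∀ (c : ZMod p) (a : Λ), skel η p (c + e) = some a → skel η p c = some a := by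
  intro c a ha
  have h0 : ∀ m' : ℤ, η ((c.val : ℤ) + m' * p) = a := by
    intro m'
    refine hη ((c.val : ℤ) + m' * p) a ?_
    have : (((c.val : ℤ) + m' * p : ℤ) : ZMod p) = c := by
      push_cast [ZMod.natCast_val]
      simp [ZMod.intCast_cast, ZMod.natCast_self]
    rw [this]; exact ha
  have h00 : η (c.val : ℤ) = a := by have := h0 0; simpa using this
  have hmem : ((c.val : ℤ)) ∈ PerS η p := by
    intro m; rw [h0 m, ← h00]
  rw [skel, if_pos hmem, h00]

lemma HS_of_screen {e : ZMod p}
    (h : ∀ (c : ZMod p) (a : Λ), skel η p (c + e) = some a → skel η p c = some a) :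
    ∀ c : ZMod p, skel η p (c + e) = skel η p c := by
  classical
  set S : Set (ZMod p) := {c | (skel η p c).isSome} with hS
  have himg : (fun c => c - e) '' S ⊆ S := by
    rintro _ ⟨b, hb, rfl⟩
    obtain ⟨a, ha⟩ := Option.isSome_iff_exists.mp hb
    have : skel η p ((b - e) + e) = some a := by rw [sub_add_cancel]; exact ha
    exact Option.isSome_iff_exists.mpr ⟨a, h _ _ this⟩
  have hcard : ((fun c : ZMod p => c - e) '' S).ncard = S.ncard :=
    Set.ncard_image_of_injective S (sub_left_injective)
  have heq : (fun c : ZMod p => c - e) '' S = S :=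
    Set.eq_of_subset_of_ncard_le himg (le_of_eq hcard.symm) (Set.toFinite _)
  intro c
  rcases hopt : skel η p (c + e) with _ | a
  · rcases hopt2 : skel η p c with _ | a
    · rfl
    · exfalso
      have hcS : c ∈ S := by rw [hS]; simp [hopt2]
      rw [← heq] at hcS
      obtain ⟨b, hbS, hbc⟩ := hcS
      have : b = c + e := by rw [← hbc]; ring
      rw [this] at hbS
      simp only [hS, Set.mem_setOf_eq, hopt] at hbS
      exact absurd hbS (by simp)
  · exact (h c a hopt).symm

end Screen

section Minimal
variable [TopologicalSpace Λ] [DiscreteTopology Λ] {η : ℤ → Λ}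

lemma eta_mem_closure_shifts (htoe : IsToeplitz η) {x : ℤ → Λ} (hx : x ∈ toeplitzX η) :
    η ∈ closure {y : ℤ → Λ | ∃ s : ℤ, y = fun j => x (j + s)} := by
  apply mem_closure_of_cylinder
  intro R
  set P : ℕ := PP htoe R with hP
  have hPpos : (0 : ℤ) < (P : ℤ) := by exact_mod_cast PP_pos htoe R
  obtain ⟨y, hyS, hy⟩ := cylinder_of_mem_closure hx (R + P)
  obtain ⟨t, rfl⟩ := hyS
  set s : ℤ := P * (t / P) - t with hs
  have hsb : -(P:ℤ) < s ∧ s ≤ 0 := by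
    have h1 : 0 ≤ t % P := Int.emod_nonneg t (by omega)
    have h2 : t % P < P := Int.emod_lt_of_pos t hPpos
    have h3 : (P:ℤ) * (t / P) = t - t % P := by
      have := Int.emod_add_mul_ediv t P
      linarith
    constructor <;> omega
  refine ⟨fun j => x (j + s), ⟨s, rfl⟩, ?_⟩
  intro i hi
  have hb : |i + s| ≤ ((R + P : ℕ) : ℤ) := by
    push_cast
    rcases abs_le.mp hi with ⟨hl, hr⟩
    rw [abs_le]
    constructor <;> omega
  have h4 : x (i + s) = η (i + s + t) := by
    have := hy (i + s) hb
    simpa using this.symm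
  have h5 : i + s + t = i + (t / P) * (P : ℤ) := by rw [hs]; ring
  have h6 : η (i + (t / P) * (P : ℤ)) = η i := PP_period htoe R i hi (t / P)
  simp only [h4, h5, h6]

end Minimal

section KeyScreen
variable [TopologicalSpace Λ] [DiscreteTopology Λ] {η : ℤ → Λ} {p : ℕ} [NeZero p]

lemma key_screen (htoe : IsToeplitz η) {d d' : ZMod p} {x : ℤ → Λ} (hx : x ∈ toeplitzX η)
    (h1 : x ∈ ZS η p d) (h2 : x ∈ ZS η p d') :
    ∃ e : ZMod p, ((d + e).val : ℤ) ∈ HS η p ∧ ((d' + e).val : ℤ) ∈ HS η p := by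
  have hO : {y : ℤ → Λ | ∃ s : ℤ, y = fun j => x (j + s)} ⊆
      ⋃ e : ZMod p, (ZS η p (d + (e : ZMod p)) ∩ ZS η p (d' + (e : ZMod p))) := by
    rintro y ⟨s, rfl⟩
    refine Set.mem_iUnion.mpr ⟨(s : ZMod p), ZS_shift h1 s, ZS_shift h2 s⟩
  have hclosed : IsClosed (⋃ e : ZMod p, (ZS η p (d + e) ∩ ZS η p (d' + e))) :=
    isClosed_iUnion_of_finite fun e => (ZS_closed η p _).inter (ZS_closed η p _)
  have hηmem : η ∈ ⋃ e : ZMod p, (ZS η p (d + e) ∩ ZS η p (d' + e)) := by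
    have := eta_mem_closure_shifts htoe hx
    exact (closure_minimal hO hclosed) this
  obtain ⟨e, he1, he2⟩ := Set.mem_iUnion.mp hηmem
  refine ⟨e, ?_, ?_⟩
  · intro c
    have hc : (((d + e).val : ℤ) : ZMod p) = d + e := by
      push_cast [ZMod.natCast_val]; simp [ZMod.intCast_cast]
    rw [hc]
    exact HS_of_screen (screen he1) c
  · intro c
    have hc : (((d' + e).val : ℤ) : ZMod p) = d' + e := by
      push_cast [ZMod.natCast_val]; simp [ZMod.intCast_cast]
    rw [hc]
    exact HS_of_screen (screen he2) c

end KeyScreen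

section Indicator

open scoped Classical in
lemma clopen_indicator_cont {Y : Type*} [TopologicalSpace Y] {A : Set Y} (h : IsClopen A) :
    Continuous (fun y => if y ∈ A then (1:ℤ) else 0) := by
  apply IsLocallyConstant.continuous
  intro s
  by_cases h1 : (1:ℤ) ∈ s <;> by_cases h0 : (0:ℤ) ∈ s
  · have : (fun y => if y ∈ A then (1:ℤ) else 0) ⁻¹' s = Set.univ := by
      ext y; by_cases hy : y ∈ A <;> simp [hy, h1, h0]
    rw [this]; exact isOpen_univ
  · have : (fun y => if y ∈ A then (1:ℤ) else 0) ⁻¹' s = A := by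
      ext y; by_cases hy : y ∈ A <;> simp [hy, h1, h0]
    rw [this]; exact h.2
  · have : (fun y => if y ∈ A then (1:ℤ) else 0) ⁻¹' s = Aᶜ := by
      ext y; by_cases hy : y ∈ A <;> simp [hy, h1, h0]
    rw [this]; exact h.1.isOpen_compl
  · have : (fun y => if y ∈ A then (1:ℤ) else 0) ⁻¹' s = ∅ := by
      ext y; by_cases hy : y ∈ A <;> simp [hy, h1, h0]
    rw [this]; exact isOpen_empty

end Indicator

section TsymLemmas
variable [TopologicalSpace Λ] [DiscreteTopology Λ]

lemma Tsym_val (η : ℤ → Λ) (x : ↥(toeplitzX η)) :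
    (((toeplitzT η).symm x : ↥(toeplitzX η)) : ℤ → Λ) = fun k => (x : ℤ → Λ) (k - 1) := by
  rfl

lemma Tsym_iter_val (η : ℤ → Λ) (i : ℕ) (x : ↥(toeplitzX η)) :
    ((((toeplitzT η).symm)^[i] x : ↥(toeplitzX η)) : ℤ → Λ) = fun k => (x : ℤ → Λ) (k - i) := by
  induction i with
  | zero => simp
  | succ n ih =>
    rw [Function.iterate_succ_apply', Tsym_val, ih]
    funext k
    push_cast
    ring_nf

end TsymLemmas

section Main2
variable [TopologicalSpace Λ] [DiscreteTopology Λ] {η : ℤ → Λ}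

open scoped Classical in
lemma mainL (htoe : IsToeplitz η) (L : ℕ) :
    ∃ q : ℕ, 0 < q ∧ (∀ n : ℤ, |n| ≤ (L : ℤ) → ∀ m : ℤ, η (n + m * q) = η n) ∧
    ∃ f g : C(↥(toeplitzX η), ℤ),
      ((q : ℕ) : ℤ) • f - 1 =
        g - g.comp ((toeplitzT η).symm : C(↥(toeplitzX η), ↥(toeplitzX η))) := by
  set p : ℕ := PP htoe L with hpdef
  have hppos : 0 < p := PP_pos htoe L
  haveI : NeZero p := ⟨by omega⟩
  have hIccD : ∀ n : ℤ, |n| ≤ (L : ℤ) → n ∈ PerS η p := fun n hn => PP_period htoe L n hn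
  obtain ⟨gg, hgg⟩ := Int.subgroup_cyclic (HS η p)
  have hpH : (p : ℤ) ∈ HS η p := by
    intro c
    have : ((p : ℤ) : ZMod p) = 0 := by push_cast; simp
    rw [this, add_zero]
  have hggdvd : gg ∣ (p : ℤ) := by
    rw [hgg, AddSubgroup.mem_closure_singleton] at hpH
    obtain ⟨m, hm⟩ := hpH
    exact Dvd.intro_left m (by rw [← hm]; simp [zsmul_eq_mul])
  set q : ℕ := gg.natAbs with hqdef
  have hq0 : 0 < q := by
    have : gg ≠ 0 := by
      rintro rfl
      simp at hggdvd
      omega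
    positivity
  haveI : NeZero q := ⟨by omega⟩
  have hqdvd : q ∣ p := by
    have := Int.natAbs_dvd_natAbs.mpr hggdvd
    simpa using this
  have hggH : gg ∈ HS η p := by
    rw [hgg]; exact AddSubgroup.subset_closure rfl
  have hqH : (q : ℤ) ∈ HS η p := by
    rcases Int.natAbs_eq gg with h | h
    · rw [hqdef, ← h]; exact hggH
    · rw [hqdef]
      have : ((gg.natAbs : ℤ)) = -gg := by omega
      rw [this]; exact (HS η p).neg_mem hggH
  have hHq : ∀ s ∈ HS η p, (q : ℤ) ∣ s := by
    intro s hs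
    rw [hgg, AddSubgroup.mem_closure_singleton] at hs
    obtain ⟨m, hm⟩ := hs
    exact Int.natAbs_dvd.mpr (Dvd.intro_left m (by rw [← hm]; simp [zsmul_eq_mul]))
  have hperiodic : ∀ n : ℤ, |n| ≤ (L : ℤ) → ∀ m : ℤ, η (n + m * q) = η n := by
    intro n hn m
    have hsmem : (m * q : ℤ) ∈ HS η p := by
      have := AddSubgroup.zsmul_mem (HS η p) hqH m
      simpa [zsmul_eq_mul] using this
    exact (HS_stab hsmem (hIccD n hn)).2
  refine ⟨q, hq0, hperiodic, ?_⟩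
  -- the continuous functions
  set castq : ZMod p →+* ZMod q := ZMod.castHom hqdvd (ZMod q) with hcastq
  set U : Set (ℤ → Λ) := ⋃ (d : ZMod p) (_ : castq d = 0), ZS η p d with hU
  set Uc : Set (ℤ → Λ) := ⋃ (d : ZMod p) (_ : castq d ≠ 0), ZS η p d with hUc
  have hUclosed : IsClosed U :=
    Set.Finite.isClosed_biUnion (Set.toFinite _) fun d _ => ZS_closed η p d
  have hUcclosed : IsClosed Uc :=
    Set.Finite.isClosed_biUnion (Set.toFinite _) fun d _ => ZS_closed η p d
  have hcover : ∀ x ∈ toeplitzX η, ∃ d : ZMod p, x ∈ ZS η p d := by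
    intro x hx
    have horb : shiftOrbit η ⊆ ⋃ d : ZMod p, ZS η p d := by
      rintro y ⟨n, rfl⟩
      exact Set.mem_iUnion.mpr ⟨(n : ZMod p), orbit_mem_ZS η p n⟩
    have : toeplitzX η ⊆ ⋃ d : ZMod p, ZS η p d :=
      closure_minimal horb (isClosed_iUnion_of_finite fun d => ZS_closed η p d)
    exact Set.mem_iUnion.mp (this hx)
  have hcast0 : ∀ d : ZMod p, ((d.val : ℤ) ∈ HS η p) → castq d = 0 := by
    intro d hd
    have h1 : (q : ℤ) ∣ (d.val : ℤ) := hHq _ hd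
    have h2 : d = ((d.val : ℤ) : ZMod p) := by
      push_cast [ZMod.natCast_val]; simp [ZMod.intCast_cast]
    rw [h2, map_intCast]
    exact (ZMod.intCast_zmod_eq_zero_iff_dvd _ q).mpr (by exact_mod_cast h1)
  have hdisj : ∀ x ∈ toeplitzX η, ∀ d d' : ZMod p,
      x ∈ ZS η p d → x ∈ ZS η p d' → castq d = castq d' := by
    intro x hx d d' h1 h2
    obtain ⟨e, he1, he2⟩ := key_screen htoe hx h1 h2
    have c1 : castq (d + e) = 0 := hcast0 (d + e) he1
    have c2 : castq (d' + e) = 0 := hcast0 (d' + e) he2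
    have hc1 : castq d + castq e = 0 := by rw [← map_add]; exact c1
    have hc2 : castq d' + castq e = 0 := by rw [← map_add]; exact c2
    linear_combination hc1 - hc2
  -- indicator function
  set A : Set (↥(toeplitzX η)) := Subtype.val ⁻¹' U with hA
  have hAclosed : IsClosed A := hUclosed.preimage continuous_subtype_val
  have hAcompl : Aᶜ = Subtype.val ⁻¹' Uc := by
    ext x
    simp only [hA, Set.mem_compl_iff, Set.mem_preimage]
    constructor
    · intro hxU
      obtain ⟨d, hd⟩ := hcover x.val x.2
      have hdne : castq d ≠ 0 := by
        intro h0
        exact hxU (Set.mem_iUnion.mpr ⟨d, Set.mem_iUnion.mpr ⟨h0, hd⟩⟩)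
      exact Set.mem_iUnion.mpr ⟨d, Set.mem_iUnion.mpr ⟨hdne, hd⟩⟩
    · intro hxUc hxU
      obtain ⟨d, hd'⟩ := Set.mem_iUnion.mp hxU
      obtain ⟨hd0, hd⟩ := Set.mem_iUnion.mp hd'
      obtain ⟨d', hd''⟩ := Set.mem_iUnion.mp hxUc
      obtain ⟨hd0', hdc⟩ := Set.mem_iUnion.mp hd''
      exact hd0' ((hdisj x.val x.2 d' d hdc hd).trans hd0)
  have hAclopen : IsClopen A := by
    refine ⟨hAclosed, ?_⟩
    rw [← compl_compl A, hAcompl]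
    exact (hUcclosed.preimage continuous_subtype_val).isOpen_compl
  set fc : ↥(toeplitzX η) → ℤ := fun x => if x ∈ A then 1 else 0 with hfc
  have fcont : Continuous fc := clopen_indicator_cont hAclopen
  set Ts : ↥(toeplitzX η) → ↥(toeplitzX η) := ⇑((toeplitzT η).symm) with hTs
  have hTscont : Continuous Ts := (toeplitzT η).symm.continuous
  -- membership of iterates
  have hfval : ∀ (x : ↥(toeplitzX η)) (d : ZMod p), (x : ℤ → Λ) ∈ ZS η p d → ∀ i : ℕ,
      fc (Ts^[i] x) = if ((i : ZMod q)) = castq d then 1 else 0 := by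
    intro x d hd i
    have hmem : ((Ts^[i] x : ↥(toeplitzX η)) : ℤ → Λ) ∈ ZS η p (d - (i : ZMod p)) := by
      have h1 : ((Ts^[i] x : ↥(toeplitzX η)) : ℤ → Λ) = fun k => (x : ℤ → Λ) (k + (-(i : ℤ))) := by
        rw [hTs, Tsym_iter_val]
        funext k; ring_nf
      rw [h1]
      have := ZS_shift hd (-(i : ℤ))
      have hc : d + ((-(i : ℤ) : ℤ) : ZMod p) = d - (i : ZMod p) := by push_cast; ring
      rwa [hc] at this
    have hXmem : ((Ts^[i] x : ↥(toeplitzX η)) : ℤ → Λ) ∈ toeplitzX η := (Ts^[i] x).2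
    by_cases hcase : ((i : ZMod q)) = castq d
    · have hU0 : castq (d - (i : ZMod p)) = 0 := by
        rw [map_sub, ← hcase]
        simp [map_natCast]
      have : (Ts^[i] x) ∈ A :=
        Set.mem_iUnion.mpr ⟨d - (i : ZMod p), Set.mem_iUnion.mpr ⟨hU0, hmem⟩⟩
      simp [hfc, this, hcase]
    · have : (Ts^[i] x) ∉ A := by
        intro hmemA
        obtain ⟨d', hd''⟩ := Set.mem_iUnion.mp hmemA
        obtain ⟨hd0', hdz⟩ := Set.mem_iUnion.mp hd''
        have heq := (hdisj _ hXmem _ _ hmem hdz).trans hd0'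
        rw [map_sub] at heq
        apply hcase
        have : castq ((i : ℕ) : ZMod p) = ((i : ℕ) : ZMod q) := map_natCast castq i
        rw [this] at heq
        rw [sub_eq_zero] at heq
        exact heq.symm
      simp [hfc, this, hcase]
  -- the sum identity
  have hsum : ∀ x : ↥(toeplitzX η), ∑ i ∈ Finset.range q, fc (Ts^[i] x) = 1 := by
    intro x
    obtain ⟨d, hd⟩ := hcover x.val x.2
    have hrw : ∀ i ∈ Finset.range q, fc (Ts^[i] x)
        = if i = (castq d).val then 1 else 0 := by
      intro i hi
      rw [hfval x d hd i]
      congr 1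
      simp only [eq_iff_iff]
      constructor
      · intro h
        have : ((i : ZMod q)).val = (castq d).val := by rw [h]
        rwa [ZMod.val_natCast_of_lt (Finset.mem_range.mp hi)] at this
      · intro h
        rw [h, ZMod.natCast_val, ZMod.cast_id]
    rw [Finset.sum_congr rfl hrw, Finset.sum_ite_eq' (Finset.range q) ((castq d).val)
      (fun _ => (1:ℤ))]
    simp [ZMod.val_lt]
  -- construct f and g
  refine ⟨⟨fc, fcont⟩,
    ⟨fun x => ∑ i ∈ Finset.range q, ((q : ℤ) - 1 - i) * fc (Ts^[i] x),
      continuous_finset_sum _ fun i _ => continuous_const.mul (fcont.comp (hTscont.iterate i))⟩,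
    ?_⟩
  ext x
  simp only [ContinuousMap.sub_apply, ContinuousMap.smul_apply, ContinuousMap.one_apply,
    ContinuousMap.comp_apply, ContinuousMap.coe_mk, smul_eq_mul]
  have hTsx : ∀ y : ↥(toeplitzX η),
      (((toeplitzT η).symm : C(↥(toeplitzX η), ↥(toeplitzX η))) y) = Ts y := fun y => rfl
  rw [show (toeplitzT η).symm x = Ts x from rfl]
  set F : ℕ → ℤ := fun i => fc (Ts^[i] x) with hF
  have hBB : ∀ i : ℕ, fc (Ts^[i] (Ts x)) = F (i + 1) := by
    intro i
    rw [hF, ← Function.iterate_succ_apply]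
  have hrwB : ∑ i ∈ Finset.range q, ((q : ℤ) - 1 - i) * fc (Ts^[i] (Ts x))
      = ∑ i ∈ Finset.range q, ((q : ℤ) - 1 - i) * F (i + 1) :=
    Finset.sum_congr rfl fun i _ => by rw [hBB]
  rw [hrwB]
  have e1 : ∑ i ∈ Finset.range q, ((q : ℤ) - 1 - i) * F i
      = (∑ i ∈ Finset.range q, ((q : ℤ) - i) * F i) - 1 := by
    have h1 : ∑ i ∈ Finset.range q, ((q : ℤ) - 1 - i) * F i
        = ∑ i ∈ Finset.range q, (((q : ℤ) - i) * F i - F i) :=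
      Finset.sum_congr rfl fun i _ => by ring
    rw [h1, Finset.sum_sub_distrib, hsum x]
  have e2 : ∑ i ∈ Finset.range q, ((q : ℤ) - 1 - i) * F (i + 1)
      = (∑ i ∈ Finset.range q, ((q : ℤ) - i) * F i) - (q : ℤ) * F 0 := by
    have h3 : ∑ i ∈ Finset.range q, ((q : ℤ) - 1 - i) * F (i + 1)
        = ∑ i ∈ Finset.range q, ((q : ℤ) - ((i + 1 : ℕ) : ℤ)) * F (i + 1) :=
      Finset.sum_congr rfl fun i _ => by push_cast; ring
    have h4 := Finset.sum_range_succ' (fun i => ((q : ℤ) - (i : ℤ)) * F i) q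
    have h5 := Finset.sum_range_succ (fun i => ((q : ℤ) - (i : ℤ)) * F i) q
    rw [h3]
    have h6 : ∑ i ∈ Finset.range q, ((q : ℤ) - ((i + 1 : ℕ) : ℤ)) * F (i + 1)
        = ∑ i ∈ Finset.range q, (fun i : ℕ => ((q : ℤ) - (i : ℤ)) * F i) (i + 1) :=
      Finset.sum_congr rfl fun i _ => by push_cast; ring
    rw [h6]
    have h7 : ∑ i ∈ Finset.range q, (fun i : ℕ => ((q : ℤ) - (i : ℤ)) * F i) (i + 1)
        = ∑ i ∈ Finset.range (q + 1), (fun i : ℕ => ((q : ℤ) - (i : ℤ)) * F i) i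
          - ((q : ℤ) - ((0 : ℕ) : ℤ)) * F 0 := by
      rw [h4]; ring
    rw [h7, h5]
    simp
  rw [e1, e2]
  have hF0 : F 0 = fc x := by rw [hF]; simp
  rw [hF0]
  ring

end Main2

end Aux

/-- for a Toeplitz flow `(X, T)` the rational subgroup
`ℚ(K⁰(X,T), 𝟙)` is not cyclic; concretely, for every `N` there are `p > N`
and `f, g ∈ C(X, ℤ)` with `p • f - 1 = g - g ∘ T⁻¹`. -/
theorem toeplitz_rational_subgroup_noncyclic
    (Λ : Type*) [Fintype Λ] [Nonempty Λ] [TopologicalSpace Λ] [DiscreteTopology Λ]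
    (η : ℤ → Λ) (htoe : IsToeplitz η) (hnp : IsNonperiodic η) :
    ∀ N : ℕ, ∃ p : ℤ, (N : ℤ) < p ∧
      ∃ f g : C(↥(toeplitzX η), ℤ),
        p • f - 1 = g - g.comp ((toeplitzT η).symm : C(↥(toeplitzX η), ↥(toeplitzX η))) := by
  intro N
  have h := fun L => mainL htoe L
  choose qf h1 h2 h3 using h
  by_cases hex : ∃ L : ℕ, N < qf L
  · obtain ⟨L, hL⟩ := hex
    exact ⟨((qf L : ℕ) : ℤ), by exact_mod_cast hL, h3 L⟩
  · exfalso
    push_neg at hex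
    apply hnp
    have hfpos : (1 : ℤ) ≤ ((N.factorial : ℕ) : ℤ) := by
      exact_mod_cast Nat.one_le_iff_ne_zero.mpr (Nat.factorial_ne_zero N)
    refine ⟨((N.factorial : ℕ) : ℤ), hfpos, ?_⟩
    intro n
    have habs : |n| ≤ ((n.natAbs : ℕ) : ℤ) := by
      rw [Int.abs_eq_natAbs]
    have hL := h2 n.natAbs n habs
    have hdvd : qf n.natAbs ∣ N.factorial := Nat.dvd_factorial (h1 _) (hex _)
    obtain ⟨c, hc⟩ := hdvd
    have hcast : n + ((N.factorial : ℕ) : ℤ) = n + (c : ℤ) * ((qf n.natAbs : ℕ) : ℤ) := by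
      rw [hc]; push_cast; ring
    rw [hcast]
    exact hL c
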